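/- arXiv:1609.01255 — 3 statements merged into one kernel-verified Lean document; each statement's English description precedes it below -/
import Mathlib

section
/- Fix ℓ > 0 and a nonzero constant. Define û : ℝ^5 → ℝ by û(ξ_1, ξ_2, ξ_3, ξ_4, ξ_5) = −e^{ξ_3} (e^{ξ_4} / e^{2ξ_5}) (1 − Ha(ξ) · cosh(Ha(ξ))/sinh(Ha(ξ))), where Ha(ξ) = e^{ξ_5} ℓ / √(e^{ξ_4} e^{ξ_1}); equivalently, û is the Hartmann average velocity u_avg(μ, ρ, p', η, B_0) = −p'(η/B_0²)(1 − Ha·coth(Ha)) evaluated at μ = e^{ξ_1}, ρ = e^{ξ_2}, p' = e^{ξ_3}, η = e^{ξ_4}, B_0 = e^{ξ_5}. Then û is differentiable and, for every ξ ∈ ℝ^5, the gradient ∇û(ξ) lies in the two-dimensional subspace of ℝ^5 spanned by the vectors a = (0, 0, 1, 1, −2) and b = (−1/2, 0, 0, −1/2, 1). -/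
open Real


/-- **Ridge structure of the Hartmann average velocity in log variables.** With `ℓ > 0` fixed,
the Hartmann average velocity `u_avg = −p'(η/B₀²)(1 − Ha·coth Ha)`, `Ha = B₀ℓ/√(ημ)`,
evaluated at `μ = e^{ξ₀}`, `ρ = e^{ξ₁}`, `p' = e^{ξ₂}`, `η = e^{ξ₃}`, `B₀ = e^{ξ₄}`, is a
differentiable function of `ξ ∈ ℝ⁵` whose gradient everywhere lies in the span of
`a = (0,0,1,1,−2)` and `b = (−1/2,0,0,−1/2,1)`. -/
theorem stmt13 (ℓ : ℝ) (hℓ : 0 < ℓ)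
    (u : EuclideanSpace ℝ (Fin 5) → ℝ)
    (hu : ∀ ξ : EuclideanSpace ℝ (Fin 5),
      u ξ = -(Real.exp (ξ 2)) * (Real.exp (ξ 3) / Real.exp (2 * ξ 4)) *
        (1 - (Real.exp (ξ 4) * ℓ / Real.sqrt (Real.exp (ξ 3) * Real.exp (ξ 0))) *
          (Real.cosh (Real.exp (ξ 4) * ℓ / Real.sqrt (Real.exp (ξ 3) * Real.exp (ξ 0))) /
           Real.sinh (Real.exp (ξ 4) * ℓ / Real.sqrt (Real.exp (ξ 3) * Real.exp (ξ 0))))))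
    (a b : EuclideanSpace ℝ (Fin 5))
    (ha : a = !₂[0, 0, 1, 1, -2]) (hb : b = !₂[-1/2, 0, 0, -1/2, 1]) :
    Differentiable ℝ u ∧
    ∀ ξ : EuclideanSpace ℝ (Fin 5),
      gradient u ξ ∈ Submodule.span ℝ ({a, b} : Set (EuclideanSpace ℝ (Fin 5))) := by
  set g : ℝ → ℝ := fun t => (ℓ * Real.exp t) *
      (Real.cosh (ℓ * Real.exp t) / Real.sinh (ℓ * Real.exp t)) with hgdef
  set F : ℝ × ℝ → ℝ := fun p => -Real.exp p.1 * (1 - g p.2) with hFdef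
  set L : EuclideanSpace ℝ (Fin 5) →L[ℝ] ℝ × ℝ :=
    (innerSL ℝ a).prod (innerSL ℝ b) with hLdef
  have hia : ∀ v : EuclideanSpace ℝ (Fin 5), (inner ℝ a v : ℝ) = v 2 + v 3 - 2 * v 4 := by
    intro v
    simp [PiLp.inner_apply, Fin.sum_univ_five, ha]
    ring
  have hib : ∀ v : EuclideanSpace ℝ (Fin 5),
      (inner ℝ b v : ℝ) = -(1/2) * v 0 - (1/2) * v 3 + v 4 := by
    intro v
    simp [PiLp.inner_apply, Fin.sum_univ_five, hb]
    ring
  -- key pointwise identity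
  have key : ∀ ξ, u ξ = F (L ξ) := by
    intro ξ
    have hsq : Real.sqrt (Real.exp (ξ 3) * Real.exp (ξ 0)) =
        Real.exp ((ξ 3 + ξ 0) / 2) := by
      rw [← Real.exp_add, Real.exp_half]
    have hha : Real.exp (ξ 4) * ℓ / Real.sqrt (Real.exp (ξ 3) * Real.exp (ξ 0)) =
        ℓ * Real.exp (-(1/2) * ξ 0 - (1/2) * ξ 3 + ξ 4) := by
      rw [hsq, div_eq_iff (by positivity), mul_assoc, ← Real.exp_add]
      ring_nf
    have hs : Real.exp (ξ 2 + ξ 3 - 2 * ξ 4) =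
        Real.exp (ξ 2) * (Real.exp (ξ 3) / Real.exp (2 * ξ 4)) := by
      rw [Real.exp_sub, Real.exp_add]; ring
    rw [hu]
    show _ = -Real.exp ((L ξ).1) * (1 - g ((L ξ).2))
    have h1 : (L ξ).1 = (inner ℝ a ξ : ℝ) := rfl
    have h2 : (L ξ).2 = (inner ℝ b ξ : ℝ) := rfl
    rw [h1, h2, hia, hib, hgdef]
    simp only [hha, hs]
    ring
  have hu' : u = F ∘ L := funext key
  have hgdiff : Differentiable ℝ g := by
    intro t
    have hx : DifferentiableAt ℝ (fun t => ℓ * Real.exp t) t :=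
      (differentiable_exp t).const_mul ℓ
    have hne : Real.sinh (ℓ * Real.exp t) ≠ 0 :=
      ne_of_gt (Real.sinh_pos_iff.2 (by positivity))
    exact hx.mul ((hx.cosh).div (hx.sinh) hne)
  have hFdiff : Differentiable ℝ F :=
    ((differentiable_fst.exp).neg).mul
      ((differentiable_const 1).sub (hgdiff.comp differentiable_snd))
  constructor
  · rw [hu']; exact hFdiff.comp L.differentiable
  · intro ξ
    set D := fderiv ℝ F (L ξ) with hD
    set w := D (1, 0) • a + D (0, 1) • b with hw
    have hfd : HasFDerivAt u (D.comp L) ξ := by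
      rw [hu']
      exact ((hFdiff (L ξ)).hasFDerivAt).comp ξ L.hasFDerivAt
    have hcomp : D.comp L = InnerProductSpace.toDual ℝ _ w := by
      ext v
      have hLv : L v = (inner ℝ a v : ℝ) • ((1:ℝ), (0:ℝ)) +
          (inner ℝ b v : ℝ) • ((0:ℝ), (1:ℝ)) := by
        apply Prod.ext <;> simp [hLdef]
      show D (L v) = _
      rw [hLv, map_add, map_smul, map_smul, InnerProductSpace.toDual_apply_apply, hw,
        inner_add_left, real_inner_smul_left, real_inner_smul_left]
      simp [smul_eq_mul]
      ring
    have hgrad : HasGradientAt u w ξ := by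
      rw [hasGradientAt_iff_hasFDerivAt, ← hcomp]
      exact hfd
    rw [hgrad.gradient]
    exact Submodule.add_mem _
      (Submodule.smul_mem _ _ (Submodule.subset_span (by simp)))
      (Submodule.smul_mem _ _ (Submodule.subset_span (by simp)))
end

section
/- Fix ℓ > 0 and μ_0 > 0. Define B̂ : ℝ^5 → ℝ as the Hartmann induced magnetic field B_ind(μ, ρ, p', η, B_0) = p' (ℓ μ_0/(2B_0)) (1 − (2√(ημ)/(B_0 ℓ)) tanh(B_0 ℓ/(2√(ημ)))) evaluated at μ = e^{ξ_1}, ρ = e^{ξ_2}, p' = e^{ξ_3}, η = e^{ξ_4}, B_0 = e^{ξ_5}. Then B̂ is differentiable and, for every ξ ∈ ℝ^5, the gradient ∇B̂(ξ) lies in the two-dimensional subspace of ℝ^5 spanned by the vectors a' = (0, 0, 1, 0, −1) and b = (−1/2, 0, 0, −1/2, 1); in particular, the second component of ∇B̂(ξ) is zero for all ξ. -/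
/-- **Ridge structure of the Hartmann induced magnetic field in log variables.** With
`ℓ > 0`, `μ₀ > 0` fixed, the induced field
`B_ind = p'(ℓμ₀/(2B₀))(1 − (2√(ημ)/(B₀ℓ))·tanh(B₀ℓ/(2√(ημ))))` evaluated at `μ = e^{ξ₀}`,
`ρ = e^{ξ₁}`, `p' = e^{ξ₂}`, `η = e^{ξ₃}`, `B₀ = e^{ξ₄}` is differentiable in `ξ ∈ ℝ⁵` with
gradient everywhere in the span of `a' = (0,0,1,0,−1)` and `b = (−1/2,0,0,−1/2,1)`; in
particular the second component of the gradient vanishes identically. -/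
theorem stmt14 (ℓ μ₀ : ℝ) (hℓ : 0 < ℓ) (hμ₀ : 0 < μ₀)
    (B : EuclideanSpace ℝ (Fin 5) → ℝ)
    (hB : ∀ ξ : EuclideanSpace ℝ (Fin 5),
      B ξ = Real.exp (ξ 2) * (ℓ * μ₀ / (2 * Real.exp (ξ 4))) *
        (1 - (2 * Real.sqrt (Real.exp (ξ 3) * Real.exp (ξ 0)) / (Real.exp (ξ 4) * ℓ)) *
          Real.tanh (Real.exp (ξ 4) * ℓ /
            (2 * Real.sqrt (Real.exp (ξ 3) * Real.exp (ξ 0))))))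
    (a' b : EuclideanSpace ℝ (Fin 5))
    (ha' : a' = WithLp.toLp 2 (![0, 0, 1, 0, -1] : Fin 5 → ℝ))
    (hb : b = WithLp.toLp 2 (![-1/2, 0, 0, -1/2, 1] : Fin 5 → ℝ)) :
    Differentiable ℝ B ∧
    (∀ ξ : EuclideanSpace ℝ (Fin 5),
      gradient B ξ ∈ Submodule.span ℝ ({a', b} : Set (EuclideanSpace ℝ (Fin 5)))) ∧
    ∀ ξ : EuclideanSpace ℝ (Fin 5), gradient B ξ 1 = 0 := by
  have hℓ' : ℓ ≠ 0 := ne_of_gt hℓ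
  -- the two-variable ridge profile
  set g : ℝ × ℝ → ℝ := fun p =>
    ℓ * μ₀ / 2 * Real.exp p.1 *
      (1 - 2 * (ℓ * Real.exp p.2)⁻¹ * Real.tanh (ℓ * Real.exp p.2 / 2)) with hg_def
  set L : EuclideanSpace ℝ (Fin 5) →L[ℝ] ℝ × ℝ :=
    (innerSL ℝ a').prod (innerSL ℝ b) with hL_def
  -- B factors through L
  have hL1 : ∀ ξ : EuclideanSpace ℝ (Fin 5), (L ξ).1 = ξ 2 - ξ 4 := by
    intro ξ
    simp [hL_def, ha', PiLp.inner_apply, Fin.sum_univ_five]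
    ring
  have hL2 : ∀ ξ : EuclideanSpace ℝ (Fin 5),
      (L ξ).2 = ξ 4 - (ξ 3 + ξ 0) / 2 := by
    intro ξ
    simp [hL_def, hb, PiLp.inner_apply, Fin.sum_univ_five]
    ring
  have hsqrt : ∀ ξ : EuclideanSpace ℝ (Fin 5),
      Real.sqrt (Real.exp (ξ 3) * Real.exp (ξ 0)) = Real.exp ((ξ 3 + ξ 0) / 2) := by
    intro ξ
    have h : Real.exp (ξ 3) * Real.exp (ξ 0)
        = Real.exp ((ξ 3 + ξ 0) / 2) * Real.exp ((ξ 3 + ξ 0) / 2) := by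
      rw [← Real.exp_add, ← Real.exp_add]; ring_nf
    rw [h, Real.sqrt_mul_self (Real.exp_nonneg _)]
  have hBg : ∀ ξ, B ξ = g (L ξ) := by
    intro ξ
    rw [hB, hg_def]
    simp only [hL1, hL2, hsqrt]
    have h1 : Real.exp (ξ 2 - ξ 4) = Real.exp (ξ 2) / Real.exp (ξ 4) := Real.exp_sub _ _
    have h2 : Real.exp (ξ 4 - (ξ 3 + ξ 0) / 2)
        = Real.exp (ξ 4) / Real.exp ((ξ 3 + ξ 0) / 2) := Real.exp_sub _ _
    have e4 := Real.exp_ne_zero (ξ 4)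
    have e30 := Real.exp_ne_zero ((ξ 3 + ξ 0) / 2)
    have harg : Real.exp (ξ 4) * ℓ / (2 * Real.exp ((ξ 3 + ξ 0) / 2))
        = ℓ * Real.exp (ξ 4 - (ξ 3 + ξ 0) / 2) / 2 := by
      rw [h2]; field_simp
    rw [harg, h1, h2]
    field_simp
  have hBfun : B = g ∘ L := funext hBg
  -- differentiability of g
  have htanh : Differentiable ℝ Real.tanh := by
    have : Real.tanh = fun x => Real.sinh x / Real.cosh x :=
      funext fun x => Real.tanh_eq_sinh_div_cosh x
    rw [this]
    exact Real.differentiable_sinh.div Real.differentiable_cosh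
      (fun x => (Real.cosh_pos x).ne')
  have hexp2 : Differentiable ℝ (fun p : ℝ × ℝ => ℓ * Real.exp p.2) :=
    (Real.differentiable_exp.comp differentiable_snd).const_mul ℓ
  have hne : ∀ p : ℝ × ℝ, ℓ * Real.exp p.2 ≠ 0 :=
    fun p => mul_ne_zero hℓ' (Real.exp_ne_zero _)
  have hg : Differentiable ℝ g := by
    refine ((Real.differentiable_exp.comp differentiable_fst).const_mul
      (ℓ * μ₀ / 2)).mul ((differentiable_const 1).sub ?_)
    have harg : Differentiable ℝ (fun p : ℝ × ℝ => ℓ * Real.exp p.2 / 2) := by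
      simp only [div_eq_mul_inv]; exact hexp2.mul_const _
    exact ((hexp2.inv hne).const_mul 2).mul (htanh.comp harg)
  have hBdiff : Differentiable ℝ B := by
    rw [hBfun]; exact hg.comp L.differentiable
  -- gradient computation
  have hgrad : ∀ ξ, gradient B ξ =
      (fderiv ℝ g (L ξ)) (1, 0) • a' + (fderiv ℝ g (L ξ)) (0, 1) • b := by
    intro ξ
    set D := fderiv ℝ g (L ξ) with hD
    have hfd : HasFDerivAt B (D.comp L) ξ := by
      rw [hBfun]
      exact ((hg (L ξ)).hasFDerivAt).comp ξ L.hasFDerivAt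
    have hdual : InnerProductSpace.toDual ℝ (EuclideanSpace ℝ (Fin 5))
        (D (1, 0) • a' + D (0, 1) • b) = D.comp L := by
      ext w
      have hDw : D (L w) = (L w).1 * D (1, 0) + (L w).2 * D (0, 1) := by
        have h : (L w : ℝ × ℝ) = (L w).1 • ((1 : ℝ), (0 : ℝ)) + (L w).2 • ((0 : ℝ), (1 : ℝ)) := by
          simp [Prod.ext_iff]
        conv_lhs => rw [h]
        rw [map_add, map_smul, map_smul, smul_eq_mul, smul_eq_mul]
      simp only [InnerProductSpace.toDual_apply_apply, ContinuousLinearMap.comp_apply, hDw,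
        inner_add_left, inner_smul_left, RCLike.conj_to_real, conj_trivial]
      have h1 : (inner ℝ a' w : ℝ) = (L w).1 := by simp [hL_def]
      have h2 : (inner ℝ b w : ℝ) = (L w).2 := by simp [hL_def]
      rw [h1, h2]
      ring
    have : HasGradientAt B (D (1, 0) • a' + D (0, 1) • b) ξ := by
      unfold HasGradientAt HasGradientAtFilter
      rw [hdual]
      exact hfd
    exact this.gradient
  refine ⟨hBdiff, ?_, ?_⟩
  · intro ξ
    rw [hgrad ξ]
    exact Submodule.add_mem _
      (Submodule.smul_mem _ _ (Submodule.subset_span (Set.mem_insert _ _)))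
      (Submodule.smul_mem _ _ (Submodule.subset_span
        (Set.mem_insert_of_mem _ rfl)))
  · intro ξ
    rw [hgrad ξ]
    simp [ha', hb]
end

section
/- Fix ℓ > 0. Let û : ℝ^5 → ℝ be the Hartmann average velocity in log-transformed variables, û(ξ) = −e^{ξ_3}(e^{ξ_4}/e^{2ξ_5})(1 − Ha(ξ)·cosh(Ha(ξ))/sinh(Ha(ξ))) with Ha(ξ) = e^{ξ_5}ℓ/√(e^{ξ_4} e^{ξ_1}). Let γ be any probability measure on ℝ^5 for which each partial derivative of û is square-integrable, and let C = ∫ ∇û(ξ) ∇û(ξ)ᵀ dγ(ξ) be the 5×5 active-subspace matrix. Then rank(C) ≤ 2, and every eigenvector of C with nonzero eigenvalue lies in the span of a = (0, 0, 1, 1, −2) and b = (−1/2, 0, 0, −1/2, 1). -/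
open Matrix MeasureTheory

/-- **Rank bound for the Hartmann active-subspace matrix.** Let `û` be the Hartmann average
velocity in log-transformed variables (`Ha(ξ) = e^{ξ₄}ℓ/√(e^{ξ₃}e^{ξ₀})`), let `γ` be a
probability measure on `ℝ⁵` under which the partial derivatives of `û` are square-integrable,
and let `C = ∫ ∇û ∇ûᵀ dγ` entrywise. Then `rank C ≤ 2`, and every eigenvector of `C` with
nonzero eigenvalue lies in the span of `a = (0,0,1,1,−2)` and `b = (−1/2,0,0,−1/2,1)`. -/
theorem stmt15 (ℓ : ℝ) (hℓ : 0 < ℓ)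
    (u : EuclideanSpace ℝ (Fin 5) → ℝ)
    (hu : ∀ ξ : EuclideanSpace ℝ (Fin 5),
      u ξ = -(Real.exp (ξ 2)) * (Real.exp (ξ 3) / Real.exp (2 * ξ 4)) *
        (1 - (Real.exp (ξ 4) * ℓ / Real.sqrt (Real.exp (ξ 3) * Real.exp (ξ 0))) *
          (Real.cosh (Real.exp (ξ 4) * ℓ / Real.sqrt (Real.exp (ξ 3) * Real.exp (ξ 0))) /
           Real.sinh (Real.exp (ξ 4) * ℓ / Real.sqrt (Real.exp (ξ 3) * Real.exp (ξ 0))))))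
    (γ : Measure (EuclideanSpace ℝ (Fin 5))) [IsProbabilityMeasure γ]
    (hL2 : ∀ i : Fin 5, MemLp (fun ξ => gradient u ξ i) 2 γ)
    (C : Matrix (Fin 5) (Fin 5) ℝ)
    (hC : ∀ i j, C i j = ∫ ξ, gradient u ξ i * gradient u ξ j ∂γ)
    (a b : EuclideanSpace ℝ (Fin 5))
    (ha : a = !₂[0, 0, 1, 1, -2]) (hb : b = !₂[-1/2, 0, 0, -1/2, 1]) :
    C.rank ≤ 2 ∧
    ∀ (lam : ℝ) (w : EuclideanSpace ℝ (Fin 5)), lam ≠ 0 → C *ᵥ w = lam • w →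
      w ∈ Submodule.span ℝ ({a, b} : Set (EuclideanSpace ℝ (Fin 5))) := by
  set f2 : ℝ → ℝ := fun r => 1 - (ℓ * Real.exp r) *
    (Real.cosh (ℓ * Real.exp r) / Real.sinh (ℓ * Real.exp r)) with hf2def
  set A : EuclideanSpace ℝ (Fin 5) →L[ℝ] ℝ :=
    EuclideanSpace.proj 2 + EuclideanSpace.proj 3 - (2:ℝ) • EuclideanSpace.proj 4 with hAdef
  set B : EuclideanSpace ℝ (Fin 5) →L[ℝ] ℝ :=
    EuclideanSpace.proj 4 - (1/2:ℝ) • EuclideanSpace.proj 3 - (1/2:ℝ) • EuclideanSpace.proj 0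
      with hBdef
  have hA : ∀ ξ : EuclideanSpace ℝ (Fin 5), A ξ = ξ 2 + ξ 3 - 2 * ξ 4 := by
    intro ξ; simp [hAdef]
  have hB : ∀ ξ : EuclideanSpace ℝ (Fin 5), B ξ = ξ 4 - ξ 3 / 2 - ξ 0 / 2 := by
    intro ξ; simp [hBdef]; ring
  have hsqrt : ∀ x y : ℝ, Real.sqrt (Real.exp x * Real.exp y) = Real.exp (x/2 + y/2) := by
    intro x y
    rw [← Real.exp_add, show x + y = (x/2 + y/2) + (x/2 + y/2) by ring, Real.exp_add, ← sq,
      Real.sqrt_sq (Real.exp_nonneg _)]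
  have hridge : ∀ ξ, u ξ = -Real.exp (A ξ) * f2 (B ξ) := by
    intro ξ
    have hHa : Real.exp (ξ 4) * ℓ / Real.sqrt (Real.exp (ξ 3) * Real.exp (ξ 0))
        = ℓ * Real.exp (B ξ) := by
      rw [hsqrt, hB ξ, show ξ 4 - ξ 3/2 - ξ 0/2 = ξ 4 - (ξ 3/2 + ξ 0/2) by ring, Real.exp_sub]
      field_simp
    rw [hu ξ, hHa, hA ξ, hf2def,
      show ξ 2 + ξ 3 - 2*ξ 4 = (ξ 2 + ξ 3) - 2*ξ 4 from rfl, Real.exp_sub, Real.exp_add]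
    ring
  -- gradient structure
  have hsinh : ∀ r : ℝ, Real.sinh (ℓ * Real.exp r) ≠ 0 := fun r =>
    ne_of_gt (Real.sinh_pos_iff.mpr (by positivity))
  have hd2 : ∀ r, DifferentiableAt ℝ f2 r := by
    intro r
    have h1 : DifferentiableAt ℝ (fun r => ℓ * Real.exp r) r :=
      (Real.differentiable_exp r).const_mul ℓ
    rw [hf2def]
    exact (differentiableAt_const 1).sub
      (h1.mul (((Real.differentiable_cosh (ℓ * Real.exp r)).comp r h1).div
        h1.sinh (hsinh r)))
  set cc : EuclideanSpace ℝ (Fin 5) → ℝ := fun ξ => f2 (B ξ) * (-Real.exp (A ξ)) with hccdef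
  set dd : EuclideanSpace ℝ (Fin 5) → ℝ := fun ξ => (-Real.exp (A ξ)) * deriv f2 (B ξ) with hdddef
  have hgrad0 : ∀ ξ (i : Fin 5), gradient u ξ i
      = cc ξ * A (EuclideanSpace.single i 1) + dd ξ * B (EuclideanSpace.single i 1) := by
    intro ξ i
    have h1 : HasFDerivAt ((fun s : ℝ => -Real.exp s) ∘ A)
        ((-Real.exp (A ξ)) • (A : EuclideanSpace ℝ (Fin 5) →L[ℝ] ℝ)) ξ :=
      HasDerivAt.comp_hasFDerivAt ξ (Real.hasDerivAt_exp (A ξ)).neg A.hasFDerivAt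
    have h2 : HasFDerivAt (f2 ∘ B)
        ((deriv f2 (B ξ)) • (B : EuclideanSpace ℝ (Fin 5) →L[ℝ] ℝ)) ξ :=
      HasDerivAt.comp_hasFDerivAt ξ (hd2 (B ξ)).hasDerivAt B.hasFDerivAt
    have hmul := h1.mul h2
    have hU : HasFDerivAt u
        ((-Real.exp (A ξ)) • ((deriv f2 (B ξ)) • (B : EuclideanSpace ℝ (Fin 5) →L[ℝ] ℝ))
          + f2 (B ξ) • ((-Real.exp (A ξ)) • (A : EuclideanSpace ℝ (Fin 5) →L[ℝ] ℝ))) ξ := by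
      have hfun : u = fun ξ => -Real.exp (A ξ) * f2 (B ξ) := funext hridge
      rw [hfun]; exact hmul
    have hfd := hU.fderiv
    have hg : gradient u ξ i
        = @inner ℝ _ _ (gradient u ξ) (EuclideanSpace.single i (1:ℝ)) := by
      rw [EuclideanSpace.inner_single_right]; simp
    rw [hg, gradient, InnerProductSpace.toDual_symm_apply, hfd]
    simp [hccdef, hdddef]
    ring
  have hAi : ∀ i : Fin 5, A (EuclideanSpace.single i (1:ℝ)) = a i := by
    intro i
    fin_cases i <;>
      simp [hAdef, ha, EuclideanSpace.single_apply] <;> norm_num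
  have hBi : ∀ i : Fin 5, B (EuclideanSpace.single i (1:ℝ)) = b i := by
    intro i
    fin_cases i <;>
      simp [hBdef, hb, EuclideanSpace.single_apply] <;> norm_num
  have hgrad : ∀ ξ (i : Fin 5), gradient u ξ i = cc ξ * a i + dd ξ * b i := by
    intro ξ i; rw [hgrad0 ξ i, hAi i, hBi i]
  have ha2 : a 2 = 1 := by rw [ha]; rfl
  have hb2 : b 2 = 0 := by rw [hb]; rfl
  have ha4 : a 4 = -2 := by rw [ha]; rfl
  have hb4 : b 4 = 1 := by rw [hb]; rfl
  have hcceq : (fun ξ => gradient u ξ 2) = cc := by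
    funext ξ; rw [hgrad ξ 2, ha2, hb2]; ring
  have hddeq : (fun ξ => gradient u ξ 4 + 2 * gradient u ξ 2) = dd := by
    funext ξ; rw [hgrad ξ 4, hgrad ξ 2, ha2, hb2, ha4, hb4]; ring
  have mcc : MemLp cc 2 γ := hcceq ▸ hL2 2
  have mdd : MemLp dd 2 γ := hddeq ▸ ((hL2 4).add ((hL2 2).const_mul 2))
  have hint : ∀ (f g : EuclideanSpace ℝ (Fin 5) → ℝ), MemLp f 2 γ → MemLp g 2 γ →
      Integrable (fun ξ => f ξ * g ξ) γ := by
    intro f g hf hg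
    haveI : ENNReal.HolderTriple 2 2 1 := ⟨by rw [inv_one]; exact ENNReal.inv_two_add_inv_two⟩
    have h := hg.smul (φ := f) hf (p := 2) (q := 2) (r := 1)
    exact memLp_one_iff_integrable.mp h
  set al := ∫ ξ, cc ξ * cc ξ ∂γ with hal
  set be := ∫ ξ, cc ξ * dd ξ ∂γ with hbe
  set de := ∫ ξ, dd ξ * dd ξ ∂γ with hde
  have hCij : ∀ i j, C i j = a i * a j * al + ((a i * b j + b i * a j) * be + b i * b j * de) := by
    intro i j
    rw [hC i j]
    have hpt : ∀ ξ, gradient u ξ i * gradient u ξ j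
        = a i * a j * (cc ξ * cc ξ)
          + ((a i * b j + b i * a j) * (cc ξ * dd ξ) + b i * b j * (dd ξ * dd ξ)) := by
      intro ξ; rw [hgrad ξ i, hgrad ξ j]; ring
    simp only [hpt]
    have h1 : Integrable (fun ξ => a i * a j * (cc ξ * cc ξ)) γ :=
      (hint cc cc mcc mcc).const_mul _
    have h2 : Integrable (fun ξ => (a i * b j + b i * a j) * (cc ξ * dd ξ)) γ :=
      (hint cc dd mcc mdd).const_mul _
    have h3 : Integrable (fun ξ => b i * b j * (dd ξ * dd ξ)) γ :=
      (hint dd dd mdd mdd).const_mul _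
    have h23 : Integrable (fun ξ => (a i * b j + b i * a j) * (cc ξ * dd ξ)
        + b i * b j * (dd ξ * dd ξ)) γ := h2.add h3
    rw [integral_add h1 h23, integral_add h2 h3,
      integral_const_mul, integral_const_mul, integral_const_mul]
  -- factorization
  set M : Matrix (Fin 5) (Fin 2) ℝ := fun i k => if k = 0 then a i else b i with hM
  set N : Matrix (Fin 2) (Fin 5) ℝ :=
    fun k j => if k = 0 then al * a j + be * b j else be * a j + de * b j with hN
  have hfact : C = M * N := by
    ext i j
    rw [hCij i j, Matrix.mul_apply]
    simp [Matrix.mul_apply, Fin.sum_univ_two, hM, hN]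
    ring
  constructor
  · calc C.rank = (M * N).rank := by rw [hfact]
      _ ≤ N.rank := Matrix.rank_mul_le_right M N
      _ ≤ Fintype.card (Fin 2) := N.rank_le_card_height
      _ = 2 := by simp
  · intro lam w hlam hw
    have hmv : C *ᵥ w = (∑ j, (al * a j + be * b j) * w j) • a
        + (∑ j, (be * a j + de * b j) * w j) • b := by
      funext i
      show (C *ᵥ w) i = _
      simp only [mulVec, dotProduct, hCij]
      have : ∀ x : Fin 5 → ℝ, ((∑ j, (al * a j + be * b j) * w j) • a
          + (∑ j, (be * a j + de * b j) * w j) • b) i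
          = a i * (∑ j, (al * a j + be * b j) * w j)
            + b i * (∑ j, (be * a j + de * b j) * w j) := by
        intro x
        simp [PiLp.add_apply, PiLp.smul_apply, smul_eq_mul]
        ring
      refine Eq.trans ?_ (this w).symm
      rw [Finset.mul_sum, Finset.mul_sum, ← Finset.sum_add_distrib]
      apply Finset.sum_congr rfl
      intro j _
      ring
    have hwm : w = lam⁻¹ • (C *ᵥ w) := by
      rw [hw, smul_smul, inv_mul_cancel₀ hlam, one_smul]
    rw [← WithLp.toLp_ofLp (x := w), hwm, hmv, WithLp.toLp_smul, WithLp.toLp_add, WithLp.toLp_smul,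
      WithLp.toLp_smul, WithLp.toLp_ofLp, WithLp.toLp_ofLp]
    exact Submodule.smul_mem _ _ (Submodule.add_mem _
      (Submodule.smul_mem _ _ (Submodule.subset_span (by simp)))
      (Submodule.smul_mem _ _ (Submodule.subset_span (by simp))))
end
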